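/- arXiv:2411.05866 — 2 statements merged into one kernel-verified Lean document; each statement's English description precedes it below -/
import Mathlib

section
/- Let α, β ∈ C¹([0,L]×[0,∞)) satisfy ∂_t α + λ₁ ∂_x α = 0 and ∂_t β − λ₂ ∂_x β = 0 on (0,L)×(0,∞), with α(0,t) = −r β(0,t) for all t ≥ 0. Fix ν > 0 and a > 0, and define the Lyapunov functional V(t) = ∫₀^L [(e^{−ν x/λ₁}/λ₁) α(x,t)² + a (e^{ν x/λ₂}/λ₂) β(x,t)²] dx. Then for every t > 0, V is differentiable and satisfies the identity V′(t) = −ν V(t) + (r² − a) β(0,t)² − e^{−ν L/λ₁} α(L,t)² + a e^{ν L/λ₂} β(L,t)². In particular, if a ≥ r², then V′(t) ≤ −ν V(t) + a e^{ν L/λ₂} β(L,t)². -/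
open Set Real

/-- The Lyapunov functional
`V(t) = ∫₀^L (e^{−ν x/λ₁}/λ₁) α(x,t)² + a (e^{ν x/λ₂}/λ₂) β(x,t)² dx`. -/
noncomputable def lyap (L lam1 lam2 ν a : ℝ) (α β : ℝ → ℝ → ℝ) (t : ℝ) : ℝ :=
  ∫ x in (0:ℝ)..L,
    ((Real.exp (-ν * x / lam1) / lam1) * (α x t) ^ 2
      + a * (Real.exp (ν * x / lam2) / lam2) * (β x t) ^ 2)

/-- Time partial derivative of a two variable function, via `fderivWithin`. -/
noncomputable def Dt (L : ℝ) (u : ℝ → ℝ → ℝ) (x t : ℝ) : ℝ :=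
  fderivWithin ℝ (fun p : ℝ × ℝ => u p.1 p.2) (Icc 0 L ×ˢ Ici 0) (x, t) (0, 1)

/-- Space partial derivative of a two variable function, via `fderivWithin`. -/
noncomputable def Dx (L : ℝ) (u : ℝ → ℝ → ℝ) (x t : ℝ) : ℝ :=
  fderivWithin ℝ (fun p : ℝ × ℝ => u p.1 p.2) (Icc 0 L ×ˢ Ici 0) (x, t) (1, 0)

lemma slice_hasDerivAt {L : ℝ} (u : ℝ → ℝ → ℝ)
    (hu : ContDiffOn ℝ 1 (fun p : ℝ × ℝ => u p.1 p.2) (Icc 0 L ×ˢ Ici 0))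
    {x t : ℝ} (hx : x ∈ Ioo (0:ℝ) L) (ht : t ∈ Ioi (0:ℝ)) :
    HasDerivAt (fun s => u x s) (Dt L u x t) t ∧
      HasDerivAt (fun y => u y t) (Dx L u x t) x := by
  have hmem : (x, t) ∈ interior (Icc (0:ℝ) L ×ˢ Ici (0:ℝ)) := by
    rw [interior_prod_eq, interior_Icc, interior_Ici]
    exact ⟨hx, ht⟩
  have hnhds : (Icc (0:ℝ) L ×ˢ Ici (0:ℝ)) ∈ nhds (x, t) :=
    mem_interior_iff_mem_nhds.mp hmem
  have hdiff : DifferentiableAt ℝ (fun p : ℝ × ℝ => u p.1 p.2) (x, t) :=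
    ((hu.differentiableOn one_ne_zero) (x, t) (mem_of_mem_nhds hnhds)).differentiableAt hnhds
  have hfd : fderivWithin ℝ (fun p : ℝ × ℝ => u p.1 p.2) (Icc 0 L ×ˢ Ici 0) (x, t)
      = fderiv ℝ (fun p : ℝ × ℝ => u p.1 p.2) (x, t) := fderivWithin_of_mem_nhds hnhds
  constructor
  · have hc : HasDerivAt (fun s : ℝ => ((x : ℝ), s)) ((0:ℝ), (1:ℝ)) t := by
      simpa using (hasDerivAt_const t x).prodMk (hasDerivAt_id t)
    have := hdiff.hasFDerivAt.comp_hasDerivAt t hc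
    simp only [Dt, hfd]
    simpa [Function.comp_def] using this
  · have hc : HasDerivAt (fun y : ℝ => (y, t)) ((1:ℝ), (0:ℝ)) x := by
      simpa using (hasDerivAt_id x).prodMk (hasDerivAt_const x t)
    have := hdiff.hasFDerivAt.comp_hasDerivAt x hc
    simp only [Dx, hfd]
    simpa [Function.comp_def] using this

lemma cont_Dt {L : ℝ} (hL : 0 < L) (u : ℝ → ℝ → ℝ)
    (hu : ContDiffOn ℝ 1 (fun p : ℝ × ℝ => u p.1 p.2) (Icc 0 L ×ˢ Ici 0)) :
    ContinuousOn (fun p : ℝ × ℝ => Dt L u p.1 p.2) (Icc 0 L ×ˢ Ici 0) := by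
  have hU : UniqueDiffOn ℝ (Icc (0:ℝ) L ×ˢ Ici (0:ℝ)) :=
    (uniqueDiffOn_Icc hL).prod (uniqueDiffOn_Ici 0)
  have h := hu.continuousOn_fderivWithin hU le_rfl
  have heval : Continuous fun (F : ℝ × ℝ →L[ℝ] ℝ) => F ((0:ℝ), (1:ℝ)) :=
    (ContinuousLinearMap.apply ℝ ℝ ((0:ℝ), (1:ℝ))).continuous
  have := heval.comp_continuousOn h
  simpa [Dt, Function.comp_def] using this

lemma cont_Dx {L : ℝ} (hL : 0 < L) (u : ℝ → ℝ → ℝ)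
    (hu : ContDiffOn ℝ 1 (fun p : ℝ × ℝ => u p.1 p.2) (Icc 0 L ×ˢ Ici 0)) :
    ContinuousOn (fun p : ℝ × ℝ => Dx L u p.1 p.2) (Icc 0 L ×ˢ Ici 0) := by
  have hU : UniqueDiffOn ℝ (Icc (0:ℝ) L ×ˢ Ici (0:ℝ)) :=
    (uniqueDiffOn_Icc hL).prod (uniqueDiffOn_Ici 0)
  have h := hu.continuousOn_fderivWithin hU le_rfl
  have heval : Continuous fun (F : ℝ × ℝ →L[ℝ] ℝ) => F ((1:ℝ), (0:ℝ)) :=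
    (ContinuousLinearMap.apply ℝ ℝ ((1:ℝ), (0:ℝ))).continuous
  have := heval.comp_continuousOn h
  simpa [Dx, Function.comp_def] using this

lemma cont_slice {L : ℝ} (u : ℝ → ℝ → ℝ)
    (hu : ContinuousOn (fun p : ℝ × ℝ => u p.1 p.2) (Icc 0 L ×ˢ Ici 0))
    {τ : ℝ} (hτ : 0 ≤ τ) : ContinuousOn (fun x => u x τ) (Icc 0 L) := by
  have hm : ContinuousOn (fun x : ℝ => ((x, τ) : ℝ × ℝ)) (Icc 0 L) :=
    (continuous_id.prodMk continuous_const).continuousOn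
  have h := hu.comp hm (fun x hx => Set.mem_prod.mpr ⟨hx, hτ⟩)
  simpa [Function.comp_def] using h

/-- The integrand of the Lyapunov functional. -/
noncomputable def Ff (lam1 lam2 ν a : ℝ) (α β : ℝ → ℝ → ℝ) (τ x : ℝ) : ℝ :=
  Real.exp (-ν * x / lam1) / lam1 * α x τ ^ 2
    + a * (Real.exp (ν * x / lam2) / lam2) * β x τ ^ 2

lemma lyap_eq (L lam1 lam2 ν a : ℝ) (α β : ℝ → ℝ → ℝ) :
    lyap L lam1 lam2 ν a α β = fun τ => ∫ x in (0:ℝ)..L, Ff lam1 lam2 ν a α β τ x := rfl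

/-- The time derivative of the integrand. -/
noncomputable def phif (L lam1 lam2 ν a : ℝ) (α β : ℝ → ℝ → ℝ) (p : ℝ × ℝ) : ℝ :=
  Real.exp (-ν * p.1 / lam1) / lam1 * (2 * α p.1 p.2 * Dt L α p.1 p.2)
    + a * (Real.exp (ν * p.1 / lam2) / lam2) * (2 * β p.1 p.2 * Dt L β p.1 p.2)

/-- The boundary-term potential. -/
noncomputable def gf (lam1 lam2 ν a t₀ : ℝ) (α β : ℝ → ℝ → ℝ) (x : ℝ) : ℝ :=
  -Real.exp (-ν * x / lam1) * α x t₀ ^ 2 + a * Real.exp (ν * x / lam2) * β x t₀ ^ 2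

/-- Lyapunov derivative identity for the target system, and the
resulting differential inequality when `a ≥ r²`. -/
theorem stmt_10 (L lam1 lam2 r ν a : ℝ)
    (hL : 0 < L) (h1 : 0 < lam1) (h2 : 0 < lam2) (hν : 0 < ν) (ha : 0 < a)
    (α β : ℝ → ℝ → ℝ)
    (hα : ContDiffOn ℝ 1 (fun p : ℝ × ℝ => α p.1 p.2) (Icc 0 L ×ˢ Ici 0))
    (hβ : ContDiffOn ℝ 1 (fun p : ℝ × ℝ => β p.1 p.2) (Icc 0 L ×ˢ Ici 0))
    (hαpde : ∀ x ∈ Ioo (0:ℝ) L, ∀ t ∈ Ioi (0:ℝ),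
      deriv (fun s => α x s) t + lam1 * deriv (fun y => α y t) x = 0)
    (hβpde : ∀ x ∈ Ioo (0:ℝ) L, ∀ t ∈ Ioi (0:ℝ),
      deriv (fun s => β x s) t - lam2 * deriv (fun y => β y t) x = 0)
    (hbc : ∀ t : ℝ, 0 ≤ t → α 0 t = -r * β 0 t) :
    (∀ t > (0:ℝ),
      HasDerivAt (lyap L lam1 lam2 ν a α β)
        (-ν * lyap L lam1 lam2 ν a α β t + (r ^ 2 - a) * (β 0 t) ^ 2
          - Real.exp (-ν * L / lam1) * (α L t) ^ 2
          + a * Real.exp (ν * L / lam2) * (β L t) ^ 2) t) ∧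
    (a ≥ r ^ 2 → ∀ t > (0:ℝ),
      deriv (lyap L lam1 lam2 ν a α β) t
        ≤ -ν * lyap L lam1 lam2 ν a α β t
          + a * Real.exp (ν * L / lam2) * (β L t) ^ 2) := by
  have hαc : ContinuousOn (fun p : ℝ × ℝ => α p.1 p.2) (Icc 0 L ×ˢ Ici 0) := hα.continuousOn
  have hβc : ContinuousOn (fun p : ℝ × ℝ => β p.1 p.2) (Icc 0 L ×ˢ Ici 0) := hβ.continuousOn
  -- continuity of phif on the strip
  have hφcont : ContinuousOn (phif L lam1 lam2 ν a α β) (Icc 0 L ×ˢ Ici 0) := by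
    have he1 : Continuous fun p : ℝ × ℝ => Real.exp (-ν * p.1 / lam1) / lam1 :=
      ((Real.continuous_exp.comp (by fun_prop)).div_const lam1)
    have he2 : Continuous fun p : ℝ × ℝ => Real.exp (ν * p.1 / lam2) / lam2 :=
      ((Real.continuous_exp.comp (by fun_prop)).div_const lam2)
    exact (he1.continuousOn.mul ((continuousOn_const.mul hαc).mul (cont_Dt hL α hα))).add
      ((continuousOn_const.mul he2.continuousOn).mul
        ((continuousOn_const.mul hβc).mul (cont_Dt hL β hβ)))
  -- continuity of Ff slices
  have hFcont : ∀ τ : ℝ, 0 ≤ τ → ContinuousOn (fun x => Ff lam1 lam2 ν a α β τ x) (Icc 0 L) := by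
    intro τ hτ
    have he1 : Continuous fun x : ℝ => Real.exp (-ν * x / lam1) / lam1 :=
      ((Real.continuous_exp.comp (by fun_prop)).div_const lam1)
    have he2 : Continuous fun x : ℝ => Real.exp (ν * x / lam2) / lam2 :=
      ((Real.continuous_exp.comp (by fun_prop)).div_const lam2)
    exact (he1.continuousOn.mul ((cont_slice α hαc hτ).pow 2)).add
      ((continuousOn_const.mul he2.continuousOn).mul ((cont_slice β hβc hτ).pow 2))
  have main : ∀ t > (0:ℝ),
      HasDerivAt (lyap L lam1 lam2 ν a α β)
        (-ν * lyap L lam1 lam2 ν a α β t + (r ^ 2 - a) * (β 0 t) ^ 2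
          - Real.exp (-ν * L / lam1) * (α L t) ^ 2
          + a * Real.exp (ν * L / lam2) * (β L t) ^ 2) t := by
    intro t₀ ht₀
    have ht₀m : t₀ ∈ Ioi (0:ℝ) := ht₀
    have hε : (0:ℝ) < t₀ / 2 := by linarith
    -- compact set and bound
    have hKcomp : IsCompact (Icc (0:ℝ) L ×ˢ Icc (t₀/2) (2*t₀)) := isCompact_Icc.prod isCompact_Icc
    have hKS : (Icc (0:ℝ) L ×ˢ Icc (t₀/2) (2*t₀)) ⊆ Icc 0 L ×ˢ Ici 0 := by
      intro p hp
      exact ⟨hp.1, le_trans (by linarith) hp.2.1⟩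
    obtain ⟨C, hC⟩ := hKcomp.exists_bound_of_continuousOn (hφcont.mono hKS)
    have hballK : ∀ x ∈ Set.uIoc (0:ℝ) L, ∀ τ ∈ Metric.ball t₀ (t₀/2),
        (x, τ) ∈ (Icc (0:ℝ) L ×ˢ Icc (t₀/2) (2*t₀)) := by
      intro x hx τ hτ
      rw [uIoc_of_le hL.le] at hx
      rw [Metric.mem_ball, Real.dist_eq, abs_lt] at hτ
      exact ⟨⟨hx.1.le, hx.2⟩, ⟨by linarith, by linarith⟩⟩
    -- differentiation under the integral sign
    have key := intervalIntegral.hasDerivAt_integral_of_dominated_loc_of_deriv_le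
      (F := fun τ x => Ff lam1 lam2 ν a α β τ x)
      (F' := fun τ x => phif L lam1 lam2 ν a α β (x, τ))
      (x₀ := t₀) (a := (0:ℝ)) (b := L) (bound := fun _ => C) (μ := MeasureTheory.volume) (Metric.ball_mem_nhds t₀ hε)
      (by -- hF_meas
        filter_upwards [eventually_gt_nhds ht₀] with τ hτ
        exact (((hFcont τ hτ.le).mono (by rw [uIoc_of_le hL.le]; exact Ioc_subset_Icc_self)).aestronglyMeasurable
          measurableSet_uIoc))
      (by -- hF_int
        apply ContinuousOn.intervalIntegrable
        rw [uIcc_of_le hL.le]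
        exact hFcont t₀ ht₀.le)
      (by -- hF'_meas
        have hc : ContinuousOn (fun x => phif L lam1 lam2 ν a α β (x, t₀)) (Icc 0 L) :=
          cont_slice (fun x t => phif L lam1 lam2 ν a α β (x, t)) hφcont ht₀.le
        exact (hc.mono (by rw [uIoc_of_le hL.le]; exact Ioc_subset_Icc_self)).aestronglyMeasurable
          measurableSet_uIoc)
      (by -- h_bound
        refine MeasureTheory.ae_of_all _ fun x hx τ hτ => ?_
        exact hC _ (hballK x hx τ hτ))
      (by -- bound integrable
        exact intervalIntegrable_const)
      (by -- h_diff
        have hae : ∀ᵐ x : ℝ ∂MeasureTheory.volume, x ≠ L := by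
          refine MeasureTheory.ae_iff.mpr ?_
          have : {x : ℝ | ¬x ≠ L} = {L} := by ext y; simp
          rw [this]
          exact Real.volume_singleton
        filter_upwards [hae] with x hxL hxI τ hτ
        rw [uIoc_of_le hL.le] at hxI
        have hx : x ∈ Ioo (0:ℝ) L := ⟨hxI.1, lt_of_le_of_ne hxI.2 hxL⟩
        rw [Metric.mem_ball, Real.dist_eq, abs_lt] at hτ
        have hτ0 : τ ∈ Ioi (0:ℝ) := by simp only [mem_Ioi]; linarith
        have hαt := (slice_hasDerivAt α hα hx hτ0).1
        have hβt := (slice_hasDerivAt β hβ hx hτ0).1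
        have h := ((hαt.pow 2).const_mul (Real.exp (-ν * x / lam1) / lam1)).add
          ((hβt.pow 2).const_mul (a * (Real.exp (ν * x / lam2) / lam2)))
        convert h using 1
        · rfl
        simp only [phif]; push_cast; ring)
    obtain ⟨hφint, hkey⟩ := key
    -- FTC part
    have hgderiv : ∀ x ∈ Ioo (0:ℝ) L,
        HasDerivAt (gf lam1 lam2 ν a t₀ α β)
          (phif L lam1 lam2 ν a α β (x, t₀) + ν * Ff lam1 lam2 ν a α β t₀ x) x := by
      intro x hx
      have hαx := (slice_hasDerivAt α hα hx ht₀m).2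
      have hβx := (slice_hasDerivAt β hβ hx ht₀m).2
      have hαt := (slice_hasDerivAt α hα hx ht₀m).1
      have hβt := (slice_hasDerivAt β hβ hx ht₀m).1
      have hpα := hαpde x hx t₀ ht₀m
      have hpβ := hβpde x hx t₀ ht₀m
      rw [hαt.deriv, hαx.deriv] at hpα
      rw [hβt.deriv, hβx.deriv] at hpβ
      have he1 : HasDerivAt (fun y : ℝ => -ν * y / lam1) (-ν * 1 / lam1) x :=
        ((hasDerivAt_id x).const_mul (-ν)).div_const lam1
      have he2 : HasDerivAt (fun y : ℝ => ν * y / lam2) (ν * 1 / lam2) x :=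
        ((hasDerivAt_id x).const_mul ν).div_const lam2
      have hg := ((he1.exp.neg).mul (hαx.pow 2)).add
        (((he2.exp).const_mul a).mul (hβx.pow 2))
      convert hg using 1
      · rfl
      · rfl
      · rfl
      have hDα : Dt L α x t₀ = -(lam1 * Dx L α x t₀) := by linarith
      have hDβ : Dt L β x t₀ = lam2 * Dx L β x t₀ := by linarith
      simp only [phif, Ff, hDα, hDβ, Pi.neg_apply, Pi.pow_apply]
      push_cast
      field_simp
      ring
    have hgcont : ContinuousOn (gf lam1 lam2 ν a t₀ α β) (Icc 0 L) := by
      have he1 : Continuous fun x : ℝ => -Real.exp (-ν * x / lam1) :=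
        (Real.continuous_exp.comp (by fun_prop)).neg
      have he2 : Continuous fun x : ℝ => a * Real.exp (ν * x / lam2) :=
        continuous_const.mul (Real.continuous_exp.comp (by fun_prop))
      exact (he1.continuousOn.mul ((cont_slice α hαc ht₀.le).pow 2)).add
        (he2.continuousOn.mul ((cont_slice β hβc ht₀.le).pow 2))
    have hFint : IntervalIntegrable (fun x => Ff lam1 lam2 ν a α β t₀ x)
        MeasureTheory.volume 0 L := by
      apply ContinuousOn.intervalIntegrable
      rw [uIcc_of_le hL.le]
      exact hFcont t₀ ht₀.le
    have hG'int : IntervalIntegrable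
        (fun x => phif L lam1 lam2 ν a α β (x, t₀) + ν * Ff lam1 lam2 ν a α β t₀ x)
        MeasureTheory.volume 0 L := hφint.add (hFint.const_mul ν)
    have hFTC := intervalIntegral.integral_eq_sub_of_hasDeriv_right_of_le hL.le hgcont
      (fun x hx => (hgderiv x hx).hasDerivWithinAt) hG'int
    have hsplit : (∫ x in (0:ℝ)..L,
          (phif L lam1 lam2 ν a α β (x, t₀) + ν * Ff lam1 lam2 ν a α β t₀ x))
        = (∫ x in (0:ℝ)..L, phif L lam1 lam2 ν a α β (x, t₀))
          + ν * ∫ x in (0:ℝ)..L, Ff lam1 lam2 ν a α β t₀ x := by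
      rw [intervalIntegral.integral_add hφint (hFint.const_mul ν),
        intervalIntegral.integral_const_mul]
    have hg0 : gf lam1 lam2 ν a t₀ α β 0 = -(r ^ 2 * β 0 t₀ ^ 2) + a * β 0 t₀ ^ 2 := by
      simp only [gf, hbc t₀ ht₀.le, mul_zero, zero_mul, zero_div, Real.exp_zero]
      ring
    have hgL : gf lam1 lam2 ν a t₀ α β L
        = -Real.exp (-ν * L / lam1) * α L t₀ ^ 2 + a * Real.exp (ν * L / lam2) * β L t₀ ^ 2 := rfl
    have hlyapV : lyap L lam1 lam2 ν a α β t₀ = ∫ x in (0:ℝ)..L, Ff lam1 lam2 ν a α β t₀ x := rfl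
    have hval : (∫ x in (0:ℝ)..L, phif L lam1 lam2 ν a α β (x, t₀))
        = -ν * lyap L lam1 lam2 ν a α β t₀ + (r ^ 2 - a) * β 0 t₀ ^ 2
          - Real.exp (-ν * L / lam1) * α L t₀ ^ 2
          + a * Real.exp (ν * L / lam2) * β L t₀ ^ 2 := by
      rw [hlyapV]
      rw [hsplit] at hFTC
      rw [hg0, hgL] at hFTC
      linarith
    have hkey' : HasDerivAt (lyap L lam1 lam2 ν a α β)
        (∫ x in (0:ℝ)..L, phif L lam1 lam2 ν a α β (x, t₀)) t₀ := hkey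
    rw [hval] at hkey'
    exact hkey'
  refine ⟨main, fun har t₀ ht₀ => ?_⟩
  rw [(main t₀ ht₀).deriv]
  have h1' : (r ^ 2 - a) * β 0 t₀ ^ 2 ≤ 0 :=
    mul_nonpos_of_nonpos_of_nonneg (by linarith) (sq_nonneg _)
  have h2' : 0 ≤ Real.exp (-ν * L / lam1) * α L t₀ ^ 2 :=
    mul_nonneg (Real.exp_pos _).le (sq_nonneg _)
  linarith
end

section
/- The backstepping kernel equations have at most one classical solution: if (K^w, K^v) and (J^w, J^v) are two pairs of C¹ functions on 𝒯 each satisfying λ₂ ∂_x K^w − λ₁ ∂_ξ K^w = c(ξ) K^v and ∂_x K^v + ∂_ξ K^v = 0 on 𝒯, together with the boundary conditions K^w(x,x) = −c(x)/(λ₁+λ₂) and K^v(x,0) = −K^w(x,0) for all x ∈ [0,L], then K^w = J^w and K^v = J^v on 𝒯. -/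
set_option maxHeartbeats 1000000

open Set Real intervalIntegral

lemma aux_slice_fst {F : ℝ × ℝ → ℝ} {x ξ : ℝ} (hF : DifferentiableAt ℝ F (x, ξ)) :
    HasDerivAt (fun y => F (y, ξ)) (fderiv ℝ F (x, ξ) (1, 0)) x := by
  have h := hF.hasFDerivAt.comp_hasDerivAt x ((hasDerivAt_id x).prodMk (hasDerivAt_const x ξ))
  exact h

lemma aux_slice_snd {F : ℝ × ℝ → ℝ} {x ξ : ℝ} (hF : DifferentiableAt ℝ F (x, ξ)) :
    HasDerivAt (fun s => F (x, s)) (fderiv ℝ F (x, ξ) (0, 1)) ξ := by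
  have h := hF.hasFDerivAt.comp_hasDerivAt ξ ((hasDerivAt_const ξ x).prodMk (hasDerivAt_id ξ))
  exact h

lemma aux_fderiv_dir {F : ℝ × ℝ → ℝ} {p : ℝ × ℝ} (a b : ℝ) :
    fderiv ℝ F p (a, b) = a * fderiv ℝ F p (1, 0) + b * fderiv ℝ F p (0, 1) := by
  have h : ((a, b) : ℝ × ℝ) = a • ((1:ℝ), (0:ℝ)) + b • ((0:ℝ), (1:ℝ)) := by
    simp [Prod.ext_iff]
  rw [h, map_add, map_smul, map_smul]
  simp [smul_eq_mul]

lemma aux_tri_mem_nhds {L x ξ : ℝ} (h0 : 0 < ξ) (hx : ξ < x) (hL : x < L) :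
    {p : ℝ × ℝ | 0 ≤ p.2 ∧ p.2 ≤ p.1 ∧ p.1 ≤ L} ∈ nhds ((x, ξ) : ℝ × ℝ) := by
  have hopen : IsOpen {p : ℝ × ℝ | 0 < p.2 ∧ p.2 < p.1 ∧ p.1 < L} := by
    have h1 : IsOpen {p : ℝ × ℝ | 0 < p.2} := isOpen_lt continuous_const continuous_snd
    have h2 : IsOpen {p : ℝ × ℝ | p.2 < p.1} := isOpen_lt continuous_snd continuous_fst
    have h3 : IsOpen {p : ℝ × ℝ | p.1 < L} := isOpen_lt continuous_fst continuous_const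
    exact h1.inter (h2.inter h3)
  exact Filter.mem_of_superset (hopen.mem_nhds ⟨h0, hx, hL⟩)
    (fun p hp => ⟨hp.1.le, hp.2.1.le, hp.2.2.le⟩)

lemma aux_gronwall_zero {L C : ℝ} (hC : 0 ≤ C) (g : ℝ → ℝ)
    (hg : ContinuousOn g (Icc 0 L))
    (hb : ∀ s ∈ Icc (0:ℝ) L, |g s| ≤ C * ∫ u in (0:ℝ)..s, |g u|) :
    ∀ s ∈ Icc (0:ℝ) L, g s = 0 := by
  rcases le_or_gt L 0 with hL0 | hL0
  · intro s hs
    have hs0 : s = 0 := le_antisymm (hs.2.trans hL0) hs.1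
    subst hs0
    have h := hb 0 hs
    simp only [intervalIntegral.integral_same, mul_zero] at h
    exact abs_nonpos_iff.1 h
  · set cl : ℝ → ℝ := fun u => max 0 (min u L) with hcl
    have hclcont : Continuous cl := continuous_const.max (continuous_id.min continuous_const)
    have hclmem : ∀ u, cl u ∈ Icc (0:ℝ) L :=
      fun u => ⟨le_max_left _ _, max_le hL0.le (min_le_right _ _)⟩
    have hclid : ∀ u ∈ Icc (0:ℝ) L, cl u = u := by
      intro u hu
      simp [hcl, min_eq_left hu.2, max_eq_right hu.1]
    have hgc : Continuous (fun u => |g (cl u)|) := (hg.comp_continuous hclcont hclmem).abs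
    set G : ℝ → ℝ := fun s => ∫ u in (0:ℝ)..s, |g (cl u)| with hG
    have hGd : ∀ s, HasDerivAt G (|g (cl s)|) s := fun s =>
      intervalIntegral.integral_hasDerivAt_right (hgc.intervalIntegrable _ _)
        (hgc.stronglyMeasurable.stronglyMeasurableAtFilter) hgc.continuousAt
    have hGeq : ∀ s ∈ Icc (0:ℝ) L, G s = ∫ u in (0:ℝ)..s, |g u| := by
      intro s hs
      apply intervalIntegral.integral_congr
      intro u hu
      rw [uIcc_of_le hs.1] at hu
      show |g (cl u)| = |g u|
      rw [hclid u ⟨hu.1, hu.2.trans hs.2⟩]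
    have hGnn : ∀ s, 0 ≤ s → 0 ≤ G s := by
      intro s hs
      exact intervalIntegral.integral_nonneg hs (fun u _ => abs_nonneg _)
    have key := norm_le_gronwallBound_of_norm_deriv_right_le (f := G)
      (f' := fun s => |g (cl s)|) (δ := 0) (K := C) (ε := 0) (a := 0) (b := L)
      (fun s _ => (hGd s).continuousAt.continuousWithinAt)
      (fun s _ => (hGd s).hasDerivWithinAt)
      (by simp [hG])
      (by
        intro s hs
        have hsIcc : s ∈ Icc (0:ℝ) L := ⟨hs.1, hs.2.le⟩
        show ‖|g (cl s)|‖ ≤ C * ‖G s‖ + 0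
        rw [hclid s hsIcc]
        have h1 : |g s| ≤ C * G s := by rw [hGeq s hsIcc]; exact hb s hsIcc
        have h2 : ‖G s‖ = G s := Real.norm_of_nonneg (hGnn s hs.1)
        rw [Real.norm_eq_abs, abs_abs, h2]
        linarith)
    intro s hs
    have hGs0 : G s = 0 := by
      have := key s hs
      rw [gronwallBound_ε0] at this
      have h2 : ‖G s‖ = G s := Real.norm_of_nonneg (hGnn s hs.1)
      rw [h2] at this
      have := this
      nlinarith [hGnn s hs.1, this]
    have := hb s hs
    rw [← hGeq s hs, hGs0] at this
    simpa using abs_nonpos_iff.1 (by linarith)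



lemma uniq_aux (L lam1 lam2 τ vs : ℝ) (hL : 0 < L) (h1 : 0 < lam1) (h2 : 0 < lam2)
    (hτ : 0 < τ) (hvs : 0 < vs) (w v : ℝ × ℝ → ℝ)
    (hwc : ContinuousOn w {p : ℝ × ℝ | 0 ≤ p.2 ∧ p.2 ≤ p.1 ∧ p.1 ≤ L})
    (hvc : ContinuousOn v {p : ℝ × ℝ | 0 ≤ p.2 ∧ p.2 ≤ p.1 ∧ p.1 ≤ L})
    (hwd : ∀ x ξ : ℝ, 0 < ξ → ξ < x → x < L →
      DifferentiableAt ℝ w (x, ξ) ∧ DifferentiableAt ℝ v (x, ξ) ∧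
      fderiv ℝ w (x, ξ) (lam2, -lam1) = (-(1 / τ) * Real.exp (-ξ / (τ * vs))) * v (x, ξ) ∧
      fderiv ℝ v (x, ξ) (1, 1) = 0)
    (hdiag : ∀ a ∈ Icc (0:ℝ) L, w (a, a) = 0)
    (hbot : ∀ s ∈ Icc (0:ℝ) L, v (s, 0) = - w (s, 0)) :
    ∀ x ξ : ℝ, 0 ≤ ξ → ξ ≤ x → x ≤ L → w (x, ξ) = 0 ∧ v (x, ξ) = 0 := by
  have hΛ : 0 < lam1 + lam2 := by linarith
  have hΛ' : lam1 + lam2 ≠ 0 := ne_of_gt hΛ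
  set c : ℝ → ℝ := fun r => -(1 / τ) * Real.exp (-r / (τ * vs)) with hc
  -- transport of v along characteristics
  have hv_tr : ∀ x ξ : ℝ, 0 ≤ ξ → ξ < x → x ≤ L → v (x, ξ) = v (x - ξ, 0) := by
    intro x ξ hξ0 hξx hxL
    rcases eq_or_lt_of_le hξ0 with h0 | h0
    · rw [← h0]; norm_num
    · have hψcont : ContinuousOn (fun t => v (x - ξ + t, t)) (Icc 0 ξ) := by
        apply hvc.comp (by fun_prop : Continuous fun t : ℝ => (x - ξ + t, t)).continuousOn
        intro t ht
        exact ⟨ht.1, by simp; linarith [ht.1], by simp; linarith [ht.2]⟩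
      have hψd : ∀ t ∈ Ioo (0:ℝ) ξ, HasDerivAt (fun t => v (x - ξ + t, t)) 0 t := by
        intro t ht
        obtain ⟨-, hvdiff, -, hvdir⟩ := hwd (x - ξ + t) t ht.1 (by linarith) (by linarith [ht.2])
        have hγ : HasDerivAt (fun t : ℝ => ((x - ξ + t, t) : ℝ × ℝ)) (1, 1) t := by
          exact (((hasDerivAt_id t).const_add (x - ξ))).prodMk (hasDerivAt_id t)
        have h := HasFDerivAt.comp_hasDerivAt (f := fun t : ℝ => ((x - ξ + t, t) : ℝ × ℝ))
          t hvdiff.hasFDerivAt hγ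
        rw [hvdir] at h
        exact h
      have hint := intervalIntegral.integral_eq_sub_of_hasDerivAt_of_le h0.le hψcont hψd
        (intervalIntegrable_const)
      simp only [intervalIntegral.integral_const, smul_zero] at hint
      have h' : v (x - ξ + ξ, ξ) = v (x - ξ + 0, 0) := by linarith
      rw [show x - ξ + ξ = x by ring, show x - ξ + 0 = x - ξ by ring] at h'
      exact h'
  -- boundary trace
  set g : ℝ → ℝ := fun s => w (s, 0) with hgdef
  have hgcont : ContinuousOn g (Icc 0 L) := by
    apply hwc.comp (by fun_prop : Continuous fun s : ℝ => ((s, 0) : ℝ × ℝ)).continuousOn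
    intro s hs
    exact ⟨le_rfl, hs.1, hs.2⟩
  have hg0 : g 0 = 0 := hdiag 0 ⟨le_rfl, hL.le⟩
  -- integral equation for g
  have hginteq : ∀ s ∈ Icc (0:ℝ) L,
      g s = ∫ t in (0:ℝ)..(s / (lam1 + lam2)),
        -(c (lam1 * (s / (lam1 + lam2)) - lam1 * t) * g ((lam1 + lam2) * t)) := by
    intro s hs
    rcases eq_or_lt_of_le hs.1 with h0 | h0
    · rw [← h0]; simp [hg0]
    · set T : ℝ := s / (lam1 + lam2) with hT
      set a : ℝ := lam1 * (s / (lam1 + lam2)) with ha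
      have hT0 : 0 < T := div_pos h0 hΛ
      have haT : a = lam1 * T := by rw [ha, hT]
      have haT1 : a + lam2 * T = s := by rw [ha, hT]; field_simp
      have haT2 : a - lam1 * T = 0 := by rw [ha, hT]; ring
      have hsT : s = (lam1 + lam2) * T := by rw [hT]; field_simp
      have ha0 : 0 ≤ a := by positivity
      have haL : a ≤ L := by
        have : a ≤ s := by nlinarith [hs.1]
        linarith [hs.2]
      have hmem : ∀ t ∈ Icc (0:ℝ) T, ((a + lam2 * t, a - lam1 * t) : ℝ × ℝ) ∈
          {p : ℝ × ℝ | 0 ≤ p.2 ∧ p.2 ≤ p.1 ∧ p.1 ≤ L} := by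
        intro t ht
        refine ⟨?_, ?_, ?_⟩
        · show 0 ≤ a - lam1 * t
          nlinarith [ht.2]
        · show a - lam1 * t ≤ a + lam2 * t
          nlinarith [ht.1]
        · show a + lam2 * t ≤ L
          nlinarith [ht.2, hs.2]
      have hφcont : ContinuousOn (fun t => w (a + lam2 * t, a - lam1 * t)) (Icc 0 T) :=
        hwc.comp (by fun_prop : Continuous fun t : ℝ => ((a + lam2 * t, a - lam1 * t) : ℝ × ℝ)).continuousOn hmem
      have hφd : ∀ t ∈ Ioo (0:ℝ) T, HasDerivAt (fun t => w (a + lam2 * t, a - lam1 * t))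
          (-(c (a - lam1 * t) * g ((lam1 + lam2) * t))) t := by
        intro t ht
        have hx1 : 0 < a - lam1 * t := by nlinarith [ht.2]
        have hx2 : a - lam1 * t < a + lam2 * t := by nlinarith [ht.1]
        have hx3 : a + lam2 * t < L := by nlinarith [ht.2, hs.2]
        obtain ⟨hwdiff, -, hwdir, -⟩ := hwd (a + lam2 * t) (a - lam1 * t) hx1 hx2 hx3
        have hγ : HasDerivAt (fun t : ℝ => ((a + lam2 * t, a - lam1 * t) : ℝ × ℝ)) (lam2, -lam1) t := by
          have hfst : HasDerivAt (fun t : ℝ => a + lam2 * t) lam2 t := by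
            simpa using ((hasDerivAt_id t).const_mul lam2).const_add a
          have hsnd : HasDerivAt (fun t : ℝ => a - lam1 * t) (-lam1) t := by
            simpa using (((hasDerivAt_id t).const_mul lam1).const_sub a)
          exact hfst.prodMk hsnd
        have h := HasFDerivAt.comp_hasDerivAt
          (f := fun t : ℝ => ((a + lam2 * t, a - lam1 * t) : ℝ × ℝ)) t hwdiff.hasFDerivAt hγ
        rw [hwdir] at h
        have hveq : v (a + lam2 * t, a - lam1 * t) = - g ((lam1 + lam2) * t) := by
          have e1 := hv_tr (a + lam2 * t) (a - lam1 * t) hx1.le hx2 (by linarith)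
          have e2 : a + lam2 * t - (a - lam1 * t) = (lam1 + lam2) * t := by ring
          rw [e1, e2]
          exact hbot ((lam1 + lam2) * t) ⟨by nlinarith [ht.1], by nlinarith [ht.2, hs.2]⟩
        rw [hveq] at h
        convert h using 1
        show -((-(1 / τ) * Real.exp (-(a - lam1 * t) / (τ * vs))) * g ((lam1 + lam2) * t)) = _
        ring
        all_goals rfl
      have hccont : Continuous c := by
        rw [hc]; fun_prop
      have hgpart : ContinuousOn (fun t : ℝ => g ((lam1 + lam2) * t)) (Icc 0 T) := by
        apply hgcont.comp (by fun_prop : Continuous fun t : ℝ => (lam1 + lam2) * t).continuousOn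
        intro t ht
        exact ⟨by show (0:ℝ) ≤ (lam1 + lam2) * t; nlinarith [ht.1],
          by show (lam1 + lam2) * t ≤ L; nlinarith [ht.2, hs.2]⟩
      have hintgr : IntervalIntegrable
          (fun t => -(c (a - lam1 * t) * g ((lam1 + lam2) * t))) MeasureTheory.volume 0 T := by
        apply ContinuousOn.intervalIntegrable
        rw [uIcc_of_le hT0.le]
        exact (((hccont.comp (by fun_prop : Continuous fun t : ℝ => a - lam1 * t)).continuousOn).mul
          hgpart).neg
      have hint := intervalIntegral.integral_eq_sub_of_hasDerivAt_of_le hT0.le hφcont hφd hintgr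
      have hend : w (a + lam2 * T, a - lam1 * T) = g s := by rw [haT1, haT2]
      have hstart : w (a + lam2 * 0, a - lam1 * 0) = 0 := by
        simpa using hdiag a ⟨ha0, haL⟩
      rw [hend, hstart, sub_zero] at hint
      exact hint.symm
  -- continuity facts reused
  have hccont : Continuous c := by rw [hc]; fun_prop
  have habsle : ∀ r : ℝ, 0 ≤ r → |c r| ≤ 1 / τ := by
    intro r hr
    have : |c r| = (1 / τ) * Real.exp (-r / (τ * vs)) := by
      show |-(1 / τ) * Real.exp (-r / (τ * vs))| = _
      rw [show -(1 / τ) * Real.exp (-r / (τ * vs)) = -((1 / τ) * Real.exp (-r / (τ * vs))) by ring,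
        abs_neg, abs_mul, abs_of_nonneg (by positivity : (0:ℝ) ≤ 1 / τ),
        abs_of_pos (Real.exp_pos _)]
    rw [this]
    have hexp : Real.exp (-r / (τ * vs)) ≤ 1 := by
      apply Real.exp_le_one_iff.mpr
      apply div_nonpos_of_nonpos_of_nonneg (by linarith) (by positivity)
    nlinarith [one_div_pos.mpr hτ]
  -- Gronwall bound
  have hgbound : ∀ s ∈ Icc (0:ℝ) L,
      |g s| ≤ (τ * (lam1 + lam2))⁻¹ * ∫ u in (0:ℝ)..s, |g u| := by
    intro s hs
    rw [hginteq s hs]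
    set T : ℝ := s / (lam1 + lam2) with hT
    have hT0 : 0 ≤ T := div_nonneg hs.1 hΛ.le
    have hTs : (lam1 + lam2) * T = s := by rw [hT]; field_simp
    have hglin : ContinuousOn (fun t : ℝ => g ((lam1 + lam2) * t)) (Icc 0 T) := by
      apply hgcont.comp (by fun_prop : Continuous fun t : ℝ => (lam1 + lam2) * t).continuousOn
      intro t ht
      exact ⟨by show (0:ℝ) ≤ (lam1 + lam2) * t; nlinarith [ht.1],
        by show (lam1 + lam2) * t ≤ L; nlinarith [ht.2, hs.2]⟩
    have hw1 : ContinuousOn (fun t : ℝ => |c (lam1 * T - lam1 * t) * g ((lam1 + lam2) * t)|)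
        (Icc 0 T) :=
      (((hccont.comp (by fun_prop : Continuous fun t : ℝ => lam1 * T - lam1 * t)).continuousOn).mul
        hglin).abs
    have hw2 : ContinuousOn (fun t : ℝ => (1 / τ) * |g ((lam1 + lam2) * t)|) (Icc 0 T) :=
      continuousOn_const.mul hglin.abs
    calc |∫ t in (0:ℝ)..T, -(c (lam1 * T - lam1 * t) * g ((lam1 + lam2) * t))|
        ≤ ∫ t in (0:ℝ)..T, |-(c (lam1 * T - lam1 * t) * g ((lam1 + lam2) * t))| :=
          intervalIntegral.abs_integral_le_integral_abs hT0
      _ = ∫ t in (0:ℝ)..T, |c (lam1 * T - lam1 * t) * g ((lam1 + lam2) * t)| := by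
          simp only [abs_neg]
      _ ≤ ∫ t in (0:ℝ)..T, (1 / τ) * |g ((lam1 + lam2) * t)| := by
          apply intervalIntegral.integral_mono_on hT0
            (ContinuousOn.intervalIntegrable (by rw [uIcc_of_le hT0]; exact hw1))
            (ContinuousOn.intervalIntegrable (by rw [uIcc_of_le hT0]; exact hw2))
          intro t ht
          rw [abs_mul]
          have hr : 0 ≤ lam1 * T - lam1 * t := by nlinarith [ht.2]
          have := habsle _ hr
          nlinarith [abs_nonneg (g ((lam1 + lam2) * t)), abs_nonneg (c (lam1 * T - lam1 * t))]
      _ = (1 / τ) * ∫ t in (0:ℝ)..T, |g ((lam1 + lam2) * t)| := by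
          rw [intervalIntegral.integral_const_mul]
      _ = (1 / τ) * ((lam1 + lam2)⁻¹ * ∫ u in (0:ℝ)..s, |g u|) := by
          have hcm := intervalIntegral.integral_comp_mul_left (a := (0:ℝ)) (b := T)
            (c := lam1 + lam2) (fun u => |g u|) hΛ'
          rw [mul_zero, hTs] at hcm
          rw [hcm, smul_eq_mul]
      _ = (τ * (lam1 + lam2))⁻¹ * ∫ u in (0:ℝ)..s, |g u| := by
          rw [mul_inv]
          ring
  have hgzero : ∀ s ∈ Icc (0:ℝ) L, g s = 0 :=
    aux_gronwall_zero (by positivity) g hgcont hgbound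
  -- v vanishes
  have hvlt : ∀ x ξ : ℝ, 0 ≤ ξ → ξ < x → x ≤ L → v (x, ξ) = 0 := by
    intro x ξ hξ0 hξx hxL
    rw [hv_tr x ξ hξ0 hξx hxL]
    have hxξ : x - ξ ∈ Icc (0:ℝ) L := ⟨by linarith, by linarith⟩
    rw [hbot _ hxξ]
    have : w (x - ξ, 0) = g (x - ξ) := rfl
    rw [this, hgzero _ hxξ, neg_zero]
  have hv0 : ∀ x ξ : ℝ, 0 ≤ ξ → ξ ≤ x → x ≤ L → v (x, ξ) = 0 := by
    intro x ξ hξ0 hξx hxL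
    rcases lt_or_eq_of_le hξx with hlt | heq
    · exact hvlt x ξ hξ0 hlt hxL
    · subst heq
      rcases eq_or_lt_of_le hξ0 with h0 | h0
      · rw [← h0]
        rw [hbot 0 ⟨le_rfl, hL.le⟩, hdiag 0 ⟨le_rfl, hL.le⟩, neg_zero]
      · have hcont : ContinuousOn (fun t => v (ξ, t)) (Icc 0 ξ) := by
          apply hvc.comp (by fun_prop : Continuous fun t : ℝ => ((ξ, t) : ℝ × ℝ)).continuousOn
          intro t ht
          exact ⟨ht.1, ht.2, hxL⟩
        have hne : (nhdsWithin ξ (Ico (0:ℝ) ξ)).NeBot := by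
          rw [← mem_closure_iff_nhdsWithin_neBot, closure_Ico h0.ne]
          exact right_mem_Icc.mpr h0.le
        have ht1 : Filter.Tendsto (fun t => v (ξ, t)) (nhdsWithin ξ (Ico (0:ℝ) ξ))
            (nhds (v (ξ, ξ))) :=
          (hcont ξ (right_mem_Icc.mpr h0.le)).mono Ico_subset_Icc_self
        have ht2 : Filter.Tendsto (fun t => v (ξ, t)) (nhdsWithin ξ (Ico (0:ℝ) ξ)) (nhds 0) := by
          apply Filter.Tendsto.congr' _ tendsto_const_nhds
          filter_upwards [self_mem_nhdsWithin] with t ht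
          exact (hvlt ξ t ht.1 ht.2 hxL).symm
        exact tendsto_nhds_unique ht1 ht2
  -- w vanishes
  have hw0 : ∀ x ξ : ℝ, 0 ≤ ξ → ξ ≤ x → x ≤ L → w (x, ξ) = 0 := by
    intro x ξ hξ0 hξx hxL
    rcases eq_or_lt_of_le hξx with heq | hlt
    · rw [← heq]
      exact hdiag ξ ⟨hξ0, heq ▸ hxL⟩
    · have hx0 : 0 ≤ x := le_trans hξ0 hξx
      set t1 : ℝ := (x - ξ) / (lam1 + lam2) with ht1def
      set a : ℝ := (lam1 * x + lam2 * ξ) / (lam1 + lam2) with hadef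
      have ht10 : 0 < t1 := div_pos (by linarith) hΛ
      have hax : a + lam2 * t1 = x := by rw [hadef, ht1def]; field_simp; ring
      have haξ : a - lam1 * t1 = ξ := by rw [hadef, ht1def]; field_simp; ring
      have ha0 : 0 ≤ a := div_nonneg (by nlinarith) hΛ.le
      have haL : a ≤ L := by
        have : a ≤ x := by rw [hadef, div_le_iff₀ hΛ]; nlinarith
        linarith
      have hmem : ∀ t ∈ Icc (0:ℝ) t1, ((a + lam2 * t, a - lam1 * t) : ℝ × ℝ) ∈
          {p : ℝ × ℝ | 0 ≤ p.2 ∧ p.2 ≤ p.1 ∧ p.1 ≤ L} := by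
        intro t ht
        refine ⟨?_, ?_, ?_⟩
        · show 0 ≤ a - lam1 * t
          nlinarith [ht.2]
        · show a - lam1 * t ≤ a + lam2 * t
          nlinarith [ht.1]
        · show a + lam2 * t ≤ L
          nlinarith [ht.2]
      have hφcont : ContinuousOn (fun t => w (a + lam2 * t, a - lam1 * t)) (Icc 0 t1) :=
        hwc.comp (by fun_prop :
          Continuous fun t : ℝ => ((a + lam2 * t, a - lam1 * t) : ℝ × ℝ)).continuousOn hmem
      have hφd : ∀ t ∈ Ioo (0:ℝ) t1,
          HasDerivAt (fun t => w (a + lam2 * t, a - lam1 * t)) 0 t := by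
        intro t ht
        have hx1 : 0 < a - lam1 * t := by nlinarith [ht.2]
        have hx2 : a - lam1 * t < a + lam2 * t := by nlinarith [ht.1]
        have hx3 : a + lam2 * t < L := by nlinarith [ht.2]
        obtain ⟨hwdiff, -, hwdir, -⟩ := hwd (a + lam2 * t) (a - lam1 * t) hx1 hx2 hx3
        have hγ : HasDerivAt (fun t : ℝ => ((a + lam2 * t, a - lam1 * t) : ℝ × ℝ))
            (lam2, -lam1) t := by
          have hfst : HasDerivAt (fun t : ℝ => a + lam2 * t) lam2 t := by
            simpa using ((hasDerivAt_id t).const_mul lam2).const_add a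
          have hsnd : HasDerivAt (fun t : ℝ => a - lam1 * t) (-lam1) t := by
            simpa using (((hasDerivAt_id t).const_mul lam1).const_sub a)
          exact hfst.prodMk hsnd
        have h := HasFDerivAt.comp_hasDerivAt
          (f := fun t : ℝ => ((a + lam2 * t, a - lam1 * t) : ℝ × ℝ)) t hwdiff.hasFDerivAt hγ
        rw [hwdir, hv0 _ _ hx1.le hx2.le hx3.le, mul_zero] at h
        exact h
      have hint := intervalIntegral.integral_eq_sub_of_hasDerivAt_of_le ht10.le hφcont hφd
        intervalIntegrable_const
      simp only [intervalIntegral.integral_const, smul_zero] at hint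
      have h' : w (a + lam2 * t1, a - lam1 * t1) = w (a + lam2 * 0, a - lam1 * 0) := by linarith
      rw [hax, haξ, mul_zero, add_zero, mul_zero, sub_zero] at h'
      rw [h']
      exact hdiag a ⟨ha0, haL⟩
  intro x ξ hξ0 hξx hxL
  exact ⟨hw0 x ξ hξ0 hξx hxL, hv0 x ξ hξ0 hξx hxL⟩

/-- uniqueness of classical solutions of the backstepping kernel
equations on the triangle `𝒯 = {(x,ξ) : 0 ≤ ξ ≤ x ≤ L}`, with
`c(x) = −(1/τ) e^{−x/(τ v*)}`. -/
theorem stmt_16 (L lam1 lam2 τ vs : ℝ)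
    (hL : 0 < L) (h1 : 0 < lam1) (h2 : 0 < lam2) (hτ : 0 < τ) (hvs : 0 < vs)
    (Kw Kv Jw Jv : ℝ → ℝ → ℝ)
    (hKwC1 : ContDiffOn ℝ 1 (fun p : ℝ × ℝ => Kw p.1 p.2)
      {p : ℝ × ℝ | 0 ≤ p.2 ∧ p.2 ≤ p.1 ∧ p.1 ≤ L})
    (hKvC1 : ContDiffOn ℝ 1 (fun p : ℝ × ℝ => Kv p.1 p.2)
      {p : ℝ × ℝ | 0 ≤ p.2 ∧ p.2 ≤ p.1 ∧ p.1 ≤ L})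
    (hJwC1 : ContDiffOn ℝ 1 (fun p : ℝ × ℝ => Jw p.1 p.2)
      {p : ℝ × ℝ | 0 ≤ p.2 ∧ p.2 ≤ p.1 ∧ p.1 ≤ L})
    (hJvC1 : ContDiffOn ℝ 1 (fun p : ℝ × ℝ => Jv p.1 p.2)
      {p : ℝ × ℝ | 0 ≤ p.2 ∧ p.2 ≤ p.1 ∧ p.1 ≤ L})
    (hK1 : ∀ x ξ : ℝ, 0 ≤ ξ → ξ ≤ x → x ≤ L →
      lam2 * deriv (fun y => Kw y ξ) x - lam1 * deriv (fun s => Kw x s) ξ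
        = (-(1 / τ) * Real.exp (-ξ / (τ * vs))) * Kv x ξ)
    (hK2 : ∀ x ξ : ℝ, 0 ≤ ξ → ξ ≤ x → x ≤ L →
      deriv (fun y => Kv y ξ) x + deriv (fun s => Kv x s) ξ = 0)
    (hK3 : ∀ x ∈ Icc (0:ℝ) L,
      Kw x x = -(-(1 / τ) * Real.exp (-x / (τ * vs))) / (lam1 + lam2))
    (hK4 : ∀ x ∈ Icc (0:ℝ) L, Kv x 0 = -Kw x 0)
    (hJ1 : ∀ x ξ : ℝ, 0 ≤ ξ → ξ ≤ x → x ≤ L →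
      lam2 * deriv (fun y => Jw y ξ) x - lam1 * deriv (fun s => Jw x s) ξ
        = (-(1 / τ) * Real.exp (-ξ / (τ * vs))) * Jv x ξ)
    (hJ2 : ∀ x ξ : ℝ, 0 ≤ ξ → ξ ≤ x → x ≤ L →
      deriv (fun y => Jv y ξ) x + deriv (fun s => Jv x s) ξ = 0)
    (hJ3 : ∀ x ∈ Icc (0:ℝ) L,
      Jw x x = -(-(1 / τ) * Real.exp (-x / (τ * vs))) / (lam1 + lam2))
    (hJ4 : ∀ x ∈ Icc (0:ℝ) L, Jv x 0 = -Jw x 0) :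
    ∀ x ξ : ℝ, 0 ≤ ξ → ξ ≤ x → x ≤ L →
      Kw x ξ = Jw x ξ ∧ Kv x ξ = Jv x ξ := by
  have hwd : ∀ x ξ : ℝ, 0 < ξ → ξ < x → x < L →
      DifferentiableAt ℝ (fun p : ℝ × ℝ => Kw p.1 p.2 - Jw p.1 p.2) (x, ξ) ∧
      DifferentiableAt ℝ (fun p : ℝ × ℝ => Kv p.1 p.2 - Jv p.1 p.2) (x, ξ) ∧
      fderiv ℝ (fun p : ℝ × ℝ => Kw p.1 p.2 - Jw p.1 p.2) (x, ξ) (lam2, -lam1)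
        = (-(1 / τ) * Real.exp (-ξ / (τ * vs))) *
          (fun p : ℝ × ℝ => Kv p.1 p.2 - Jv p.1 p.2) (x, ξ) ∧
      fderiv ℝ (fun p : ℝ × ℝ => Kv p.1 p.2 - Jv p.1 p.2) (x, ξ) (1, 1) = 0 := by
    intro x ξ hx1 hx2 hx3
    have hmem := aux_tri_mem_nhds hx1 hx2 hx3
    have hKwd : DifferentiableAt ℝ (fun p : ℝ × ℝ => Kw p.1 p.2) (x, ξ) :=
      (hKwC1.contDiffAt hmem).differentiableAt one_ne_zero
    have hJwd : DifferentiableAt ℝ (fun p : ℝ × ℝ => Jw p.1 p.2) (x, ξ) :=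
      (hJwC1.contDiffAt hmem).differentiableAt one_ne_zero
    have hKvd : DifferentiableAt ℝ (fun p : ℝ × ℝ => Kv p.1 p.2) (x, ξ) :=
      (hKvC1.contDiffAt hmem).differentiableAt one_ne_zero
    have hJvd : DifferentiableAt ℝ (fun p : ℝ × ℝ => Jv p.1 p.2) (x, ξ) :=
      (hJvC1.contDiffAt hmem).differentiableAt one_ne_zero
    refine ⟨hKwd.sub hJwd, hKvd.sub hJvd, ?_, ?_⟩
    · rw [fderiv_fun_sub hKwd hJwd, ContinuousLinearMap.sub_apply,
        aux_fderiv_dir (F := fun p : ℝ × ℝ => Kw p.1 p.2) lam2 (-lam1),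
        aux_fderiv_dir (F := fun p : ℝ × ℝ => Jw p.1 p.2) lam2 (-lam1),
        ← (aux_slice_fst hKwd).deriv, ← (aux_slice_snd hKwd).deriv,
        ← (aux_slice_fst hJwd).deriv, ← (aux_slice_snd hJwd).deriv]
      have hKeq := hK1 x ξ hx1.le hx2.le hx3.le
      have hJeq := hJ1 x ξ hx1.le hx2.le hx3.le
      show lam2 * deriv (fun y => Kw y ξ) x + (-lam1) * deriv (fun s => Kw x s) ξ -
          (lam2 * deriv (fun y => Jw y ξ) x + (-lam1) * deriv (fun s => Jw x s) ξ)
          = (-(1 / τ) * Real.exp (-ξ / (τ * vs))) * (Kv x ξ - Jv x ξ)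
      linear_combination hKeq - hJeq
    · rw [fderiv_fun_sub hKvd hJvd, ContinuousLinearMap.sub_apply,
        aux_fderiv_dir (F := fun p : ℝ × ℝ => Kv p.1 p.2) 1 1,
        aux_fderiv_dir (F := fun p : ℝ × ℝ => Jv p.1 p.2) 1 1,
        ← (aux_slice_fst hKvd).deriv, ← (aux_slice_snd hKvd).deriv,
        ← (aux_slice_fst hJvd).deriv, ← (aux_slice_snd hJvd).deriv]
      have hKeq := hK2 x ξ hx1.le hx2.le hx3.le
      have hJeq := hJ2 x ξ hx1.le hx2.le hx3.le
      show 1 * deriv (fun y => Kv y ξ) x + 1 * deriv (fun s => Kv x s) ξ -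
          (1 * deriv (fun y => Jv y ξ) x + 1 * deriv (fun s => Jv x s) ξ) = 0
      linear_combination hKeq - hJeq
  have hdiag : ∀ a ∈ Icc (0:ℝ) L, (fun p : ℝ × ℝ => Kw p.1 p.2 - Jw p.1 p.2) (a, a) = 0 := by
    intro a ha
    show Kw a a - Jw a a = 0
    rw [hK3 a ha, hJ3 a ha, sub_self]
  have hbot : ∀ s ∈ Icc (0:ℝ) L, (fun p : ℝ × ℝ => Kv p.1 p.2 - Jv p.1 p.2) (s, 0)
      = - (fun p : ℝ × ℝ => Kw p.1 p.2 - Jw p.1 p.2) (s, 0) := by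
    intro s hs
    show Kv s 0 - Jv s 0 = -(Kw s 0 - Jw s 0)
    rw [hK4 s hs, hJ4 s hs]
    ring
  have key := uniq_aux L lam1 lam2 τ vs hL h1 h2 hτ hvs
    (fun p : ℝ × ℝ => Kw p.1 p.2 - Jw p.1 p.2) (fun p : ℝ × ℝ => Kv p.1 p.2 - Jv p.1 p.2)
    (hKwC1.continuousOn.sub hJwC1.continuousOn)
    (hKvC1.continuousOn.sub hJvC1.continuousOn)
    hwd hdiag hbot
  intro x ξ hξ0 hξx hxL
  obtain ⟨hw, hv⟩ := key x ξ hξ0 hξx hxL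
  have hw' : Kw x ξ - Jw x ξ = 0 := hw
  have hv' : Kv x ξ - Jv x ξ = 0 := hv
  exact ⟨by linarith, by linarith⟩
end
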